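/- arXiv:2506.09471 — 2 statements merged into one kernel-verified Lean document; each statement's English description precedes it below -/
import Mathlib

section
/- For every g ∈ Sp(2), there exist h ∈ Sp(2) and real numbers θ₁, θ₂ such that h·g·hᴴ = diag(E(θ₁), E(θ₂)). (Every element of Sp(2) is conjugate in Sp(2) to an element of the standard maximal torus of diagonal matrices with entries of the form cos θ + (sin θ)·i.) -/
open Matrix

/-- `E θ = cos θ + (sin θ)·i`, the exponential of `θ·i` in the quaternions. -/
noncomputable def E (θ : ℝ) : Quaternion ℝ := ⟨Real.cos θ, Real.sin θ, 0, 0⟩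

open Quaternion
noncomputable section

def cq (z : ℂ) : Quaternion ℝ := ⟨z.re, z.im, 0, 0⟩

lemma cq_re (z : ℂ) : (cq z).re = z.re := rfl
lemma cq_imI (z : ℂ) : (cq z).imI = z.im := rfl
lemma cq_imJ (z : ℂ) : (cq z).imJ = 0 := rfl
lemma cq_imK (z : ℂ) : (cq z).imK = 0 := rfl

def jq : Quaternion ℝ := ⟨0, 0, 1, 0⟩

lemma jq_re : jq.re = 0 := rfl
lemma jq_imI : jq.imI = 0 := rfl
lemma jq_imJ : jq.imJ = 1 := rfl
lemma jq_imK : jq.imK = 0 := rfl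

lemma cq_add (z w : ℂ) : cq (z + w) = cq z + cq w := by
  ext <;> simp [cq_re, cq_imI, cq_imJ, cq_imK]

lemma cq_mul (z w : ℂ) : cq (z * w) = cq z * cq w := by
  ext <;> simp [cq_re, cq_imI, cq_imJ, cq_imK, Complex.mul_re, Complex.mul_im]

lemma cq_one : cq 1 = 1 := by ext <;> simp [cq]

lemma cq_zero : cq 0 = 0 := by ext <;> simp [cq]

lemma cq_commute (z w : ℂ) : cq z * cq w = cq w * cq z := by
  rw [← cq_mul, ← cq_mul, mul_comm]

lemma cq_star (z : ℂ) : star (cq z) = cq (starRingEnd ℂ z) := by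
  ext <;> simp [cq_re, cq_imI, cq_imJ, cq_imK]

instance : SMul ℂ (Fin 2 → Quaternion ℝ) := ⟨fun z v n => v n * cq z⟩

lemma csmul_apply (z : ℂ) (v : Fin 2 → Quaternion ℝ) (n : Fin 2) :
    (z • v) n = v n * cq z := rfl

instance : Module ℂ (Fin 2 → Quaternion ℝ) where
  one_smul v := funext fun n => by rw [csmul_apply, cq_one, mul_one]
  mul_smul z w v := funext fun n => by
    rw [csmul_apply, csmul_apply, csmul_apply, cq_mul, cq_commute, mul_assoc]
  smul_zero z := funext fun n => zero_mul _
  smul_add z v w := funext fun n => add_mul _ _ _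
  add_smul z w v := funext fun n => by
    show v n * cq (z + w) = v n * cq z + v n * cq w
    rw [cq_add, mul_add]
  zero_smul v := funext fun n => by
    show v n * cq 0 = 0
    rw [cq_zero, mul_zero]

lemma quat_decomp (q : Quaternion ℝ) :
    q = cq ⟨q.re, q.imI⟩ + jq * cq ⟨q.imJ, -q.imK⟩ := by
  ext <;> simp [cq_re, cq_imI, cq_imJ, cq_imK, jq_re, jq_imI, jq_imJ, jq_imK]

instance : Module.Finite ℂ (Fin 2 → Quaternion ℝ) := by
  rw [Module.finite_def, Submodule.fg_def]
  refine ⟨({![1, 0], ![jq, 0], ![0, 1], ![0, jq]} :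
      Set (Fin 2 → Quaternion ℝ)), Set.toFinite _, ?_⟩
  rw [Submodule.eq_top_iff']
  intro v
  have hv : v = (⟨(v 0).re, (v 0).imI⟩ : ℂ) • ![1, 0]
      + (⟨(v 0).imJ, -(v 0).imK⟩ : ℂ) • ![jq, 0]
      + (⟨(v 1).re, (v 1).imI⟩ : ℂ) • ![0, 1]
      + (⟨(v 1).imJ, -(v 1).imK⟩ : ℂ) • ![0, jq] := by
    funext n
    fin_cases n <;>
      simp only [Fin.zero_eta, Fin.mk_one, Pi.add_apply, csmul_apply, Matrix.cons_val_zero,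
        Matrix.cons_val_one, Matrix.head_cons, one_mul, zero_mul, add_zero, zero_add] <;>
      exact quat_decomp _
  rw [hv]
  refine Submodule.add_mem _ (Submodule.add_mem _ (Submodule.add_mem _ ?_ ?_) ?_) ?_ <;>
    exact Submodule.smul_mem _ _ (Submodule.subset_span (by simp))

def Lg (g : Matrix (Fin 2) (Fin 2) (Quaternion ℝ)) :
    (Fin 2 → Quaternion ℝ) →ₗ[ℂ] (Fin 2 → Quaternion ℝ) where
  toFun := g.mulVec
  map_add' v w := by rw [Matrix.mulVec_add]
  map_smul' z v := by
    funext n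
    show (Matrix.mulVec g (z • v)) n = (z • Matrix.mulVec g v) n
    simp only [Matrix.mulVec, dotProduct, csmul_apply, Finset.sum_mul, mul_assoc]

lemma exists_eigen (g : Matrix (Fin 2) (Fin 2) (Quaternion ℝ)) :
    ∃ (μ : ℂ) (v : Fin 2 → Quaternion ℝ), v ≠ 0 ∧
      g.mulVec v = fun n => v n * cq μ := by
  obtain ⟨μ, hμ⟩ := Module.End.exists_eigenvalue (Lg g)
  obtain ⟨v, hv⟩ := hμ.exists_hasEigenvector
  refine ⟨μ, v, hv.right, ?_⟩
  have h := hv.apply_eq_smul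
  funext n
  calc g.mulVec v n = (Lg g) v n := rfl
    _ = (μ • v) n := by rw [h]
    _ = v n * cq μ := csmul_apply _ _ _

def ip (v w : Fin 2 → Quaternion ℝ) : Quaternion ℝ := star v ⬝ᵥ w

lemma ip_preserved {g : Matrix (Fin 2) (Fin 2) (Quaternion ℝ)} (hg : gᴴ * g = 1)
    (v w : Fin 2 → Quaternion ℝ) : ip (g.mulVec v) (g.mulVec w) = ip v w := by
  unfold ip
  rw [Matrix.star_mulVec, dotProduct_mulVec, Matrix.vecMul_vecMul, hg,
    Matrix.vecMul_one]

lemma ip_self (v : Fin 2 → Quaternion ℝ) :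
    ip v v = ((Quaternion.normSq (v 0) + Quaternion.normSq (v 1) : ℝ) : Quaternion ℝ) := by
  unfold ip
  simp [dotProduct, Fin.sum_univ_two, Quaternion.star_mul_self]

lemma ip_smul_right (v w : Fin 2 → Quaternion ℝ) (q : Quaternion ℝ) :
    ip v (fun n => w n * q) = ip v w * q := by
  unfold ip
  simp [dotProduct, Fin.sum_univ_two, mul_assoc, add_mul]

lemma ip_smul_left (v w : Fin 2 → Quaternion ℝ) (q : Quaternion ℝ) :
    ip (fun n => v n * q) w = star q * ip v w := by
  unfold ip
  simp [dotProduct, Fin.sum_univ_two, mul_assoc, mul_add, StarMul.star_mul]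

def iq : Quaternion ℝ := ⟨0, 1, 0, 0⟩

lemma iq_re : iq.re = 0 := rfl
lemma iq_imI : iq.imI = 1 := rfl
lemma iq_imJ : iq.imJ = 0 := rfl
lemma iq_imK : iq.imK = 0 := rfl

lemma conj_pure_to_i (p : Quaternion ℝ) (hre : p.re = 0) (hn : Quaternion.normSq p = 1) :
    ∃ u : Quaternion ℝ, star u * u = 1 ∧ u * p * star u = iq := by
  have hps : star p = -p := by ext <;> simp [hre]
  have hp2 : p * p = -1 := by
    have h := Quaternion.star_mul_self p
    rw [hps, hn, neg_mul, Quaternion.coe_one] at h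
    exact neg_eq_iff_eq_neg.mp h
  by_cases hpi : p = -iq
  · refine ⟨jq, by ext <;> simp [jq_re, jq_imI, jq_imJ, jq_imK], ?_⟩
    rw [hpi]
    ext <;> simp [jq_re, jq_imI, jq_imJ, jq_imK, iq_re, iq_imI, iq_imJ, iq_imK]
  · have hiq2 : iq * iq = -1 := by ext <;> simp [iq_re, iq_imI, iq_imJ, iq_imK]
    set w : Quaternion ℝ := iq + p with hw
    have hw0 : w ≠ 0 := fun h => hpi (eq_neg_of_add_eq_zero_right h)
    have hkey : w * p = iq * w := by
      rw [hw, add_mul, mul_add, hp2, hiq2, add_comm]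
    have hnw : Quaternion.normSq w ≠ 0 := fun h => hw0 (Quaternion.normSq_eq_zero.mp h)
    have hpos : (0:ℝ) < Quaternion.normSq w :=
      lt_of_le_of_ne (Quaternion.normSq_nonneg) (Ne.symm hnw)
    set r : ℝ := (Real.sqrt (Quaternion.normSq w))⁻¹ with hr
    have hr2 : r * r * Quaternion.normSq w = 1 := by
      rw [hr, ← mul_inv, Real.mul_self_sqrt hpos.le, inv_mul_cancel₀ hnw]
    refine ⟨r • w, ?_, ?_⟩
    · rw [Quaternion.star_smul, smul_mul_assoc, mul_smul_comm, smul_smul,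
        Quaternion.star_mul_self, Quaternion.smul_coe, hr2, Quaternion.coe_one]
    · rw [Quaternion.star_smul, smul_mul_assoc, smul_mul_assoc, mul_smul_comm, smul_smul,
        hkey, mul_assoc, Quaternion.self_mul_star, Quaternion.mul_coe_eq_smul, smul_smul,
        hr2, one_smul]

lemma conj_unit_to_E (q : Quaternion ℝ) (hq : star q * q = 1) :
    ∃ u : Quaternion ℝ, star u * u = 1 ∧ ∃ θ : ℝ, u * q * star u = E θ := by
  have hn1 : Quaternion.normSq q = 1 := by
    have h := Quaternion.star_mul_self q
    rw [hq] at h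
    exact Quaternion.coe_injective (Quaternion.coe_one.trans h).symm
  have hh := hn1
  rw [Quaternion.normSq_def'] at hh
  have him : Quaternion.normSq q.im = 1 - q.re ^ 2 := by
    simp [Quaternion.normSq_def']
    nlinarith [hh]
  have hre2 : q.re ^ 2 ≤ 1 := by
    nlinarith [Quaternion.normSq_nonneg (a := q.im)]
  have hre_le : q.re ≤ 1 := by nlinarith
  have hre_ge : -1 ≤ q.re := by nlinarith
  set θ := Real.arccos q.re with hθ
  have hcos : Real.cos θ = q.re := Real.cos_arccos hre_ge hre_le
  have hsin : Real.sin θ = Real.sqrt (1 - q.re ^ 2) := Real.sin_arccos q.re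
  by_cases himz : q.im = 0
  · refine ⟨1, by simp, θ, ?_⟩
    have h1 : (1 : ℝ) - q.re ^ 2 = 0 := by
      rw [← him, himz]
      simp
    ext
    · simp [E, hcos]
    · simp only [one_mul, star_one, mul_one, E]
      rw [hsin, h1, Real.sqrt_zero]
      have := congrArg QuaternionAlgebra.imI himz
      simpa using this.symm ▸ rfl
    · simp only [one_mul, star_one, mul_one, E]
      have := congrArg QuaternionAlgebra.imJ himz
      simpa using this
    · simp only [one_mul, star_one, mul_one, E]
      have := congrArg QuaternionAlgebra.imK himz
      simpa using this
  · set s := Real.sqrt (Quaternion.normSq q.im) with hs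
    have hnimpos : (0:ℝ) < Quaternion.normSq q.im :=
      lt_of_le_of_ne Quaternion.normSq_nonneg
        (Ne.symm fun h => himz (Quaternion.normSq_eq_zero.mp h))
    have hspos : 0 < s := Real.sqrt_pos.mpr hnimpos
    set p := s⁻¹ • q.im with hp
    have hpre : p.re = 0 := by simp [hp]
    have hpn : Quaternion.normSq p = 1 := by
      rw [hp, Quaternion.normSq_smul]
      rw [inv_pow, ← Real.sq_sqrt hnimpos.le, ← hs]
      field_simp
    obtain ⟨u, hu1, hup⟩ := conj_pure_to_i p hpre hpn
    have huu : u * star u = 1 := by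
      have h1 := Quaternion.star_mul_self u
      have h2 := Quaternion.self_mul_star u
      rw [hu1] at h1
      rw [h2, ← h1]
    refine ⟨u, hu1, θ, ?_⟩
    have hqsplit : q = (q.re : Quaternion ℝ) + s • p := by
      rw [hp, smul_smul, mul_inv_cancel₀ hspos.ne', one_smul, Quaternion.re_add_im]
    rw [hqsplit, mul_add, add_mul, mul_smul_comm, smul_mul_assoc, hup,
      ← Quaternion.coe_commutes, mul_assoc, huu, mul_one]
    have hsval : s = Real.sin θ := by rw [hsin, ← him, hs]
    ext
    · simp [E, hcos, iq_re, iq_imI, iq_imJ, iq_imK]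
    · simp [E, iq_re, iq_imI, iq_imJ, iq_imK, hsval]
    · simp [E, iq_re, iq_imI, iq_imJ, iq_imK]
    · simp [E, iq_re, iq_imI, iq_imJ, iq_imK]

lemma left_inv_comm (h : Matrix (Fin 2) (Fin 2) (Quaternion ℝ)) (hh : h * hᴴ = 1) :
    hᴴ * h = 1 := by
  have hinj : Function.Injective (h.vecMulLinear) := by
    intro a b hab
    have : ∀ v : Fin 2 → Quaternion ℝ, (v ᵥ* h) ᵥ* hᴴ = v := by
      intro v
      rw [Matrix.vecMul_vecMul, hh, Matrix.vecMul_one]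
    have ha := this a
    have hb := this b
    rw [show a ᵥ* h = h.vecMulLinear a from rfl, hab] at ha
    rw [← hb, ← ha]
    rfl
  have hsurj : Function.Surjective (h.vecMulLinear) :=
    LinearMap.injective_iff_surjective.mp hinj
  have hkey : ∀ w : Fin 2 → Quaternion ℝ, w ᵥ* (hᴴ * h) = w := by
    intro w
    obtain ⟨v, hv⟩ := hsurj w
    have hv' : v ᵥ* h = w := hv
    calc w ᵥ* (hᴴ * h) = v ᵥ* (h * (hᴴ * h)) := by rw [← hv', Matrix.vecMul_vecMul]
      _ = v ᵥ* ((h * hᴴ) * h) := by rw [Matrix.mul_assoc]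
      _ = v ᵥ* h := by rw [hh, Matrix.one_mul]
      _ = w := hv'
  refine Matrix.ext fun i j => ?_
  have h2 := congrFun (hkey (Pi.single i 1)) j
  rw [Matrix.single_one_vecMul, Matrix.row_apply] at h2
  rw [h2, Matrix.one_apply, Pi.single_apply]
  simp [eq_comm]

lemma ip_conj (v w : Fin 2 → Quaternion ℝ) : ip w v = star (ip v w) := by
  simp [ip, dotProduct, Fin.sum_univ_two, star_add, StarMul.star_mul, star_star]

def rowsM (x : Fin 2 → Fin 2 → Quaternion ℝ) : Matrix (Fin 2) (Fin 2) (Quaternion ℝ) :=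
  Matrix.of fun i k => star (x i k)

lemma mul_conjT_entry (x : Fin 2 → Fin 2 → Quaternion ℝ)
    (A : Matrix (Fin 2) (Fin 2) (Quaternion ℝ)) (i j : Fin 2) :
    (rowsM x * A * (rowsM x)ᴴ) i j = ip (x i) (A.mulVec (x j)) := by
  simp only [rowsM, Matrix.mul_apply, Matrix.conjTranspose_apply, Matrix.of_apply, ip,
    dotProduct, Matrix.mulVec, Fin.sum_univ_two, star_star, mul_add, add_mul, mul_assoc,
    Pi.star_apply]
  abel

lemma mul_conjT_self (x : Fin 2 → Fin 2 → Quaternion ℝ) (i j : Fin 2) :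
    (rowsM x * (rowsM x)ᴴ) i j = ip (x i) (x j) := by
  simp only [rowsM, Matrix.mul_apply, Matrix.conjTranspose_apply, Matrix.of_apply, ip,
    dotProduct, Fin.sum_univ_two, star_star, Pi.star_apply]

lemma mulVec_right_mul (g : Matrix (Fin 2) (Fin 2) (Quaternion ℝ))
    (v : Fin 2 → Quaternion ℝ) (q : Quaternion ℝ) :
    g.mulVec (fun n => v n * q) = fun n => g.mulVec v n * q := by
  funext n
  simp only [Matrix.mulVec, dotProduct, Fin.sum_univ_two]
  rw [add_mul, mul_assoc, mul_assoc]

lemma coe_ne_zero_q {R : ℝ} (h : R ≠ 0) : (R : Quaternion ℝ) ≠ 0 :=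
  fun hh => h (Quaternion.coe_injective (hh.trans Quaternion.coe_zero.symm))

lemma normSq_pos_q {a : Quaternion ℝ} (h : a ≠ 0) : 0 < Quaternion.normSq a :=
  lt_of_le_of_ne Quaternion.normSq_nonneg (Ne.symm (fun hh => h (Quaternion.normSq_eq_zero.mp hh)))


end

/-- every `g ∈ Sp(2) = {g : gᴴ g = 1}` is conjugate in `Sp(2)` to an element
`diag(E θ₁, E θ₂)` of the standard maximal torus. -/
theorem sp2_conjugate_to_maximalTorus
    (g : Matrix (Fin 2) (Fin 2) (Quaternion ℝ)) (hg : gᴴ * g = 1) :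
    ∃ h : Matrix (Fin 2) (Fin 2) (Quaternion ℝ), hᴴ * h = 1 ∧
      ∃ θ₁ θ₂ : ℝ, h * g * hᴴ = Matrix.diagonal ![E θ₁, E θ₂] := by
  obtain ⟨μ, v, hv0, hev⟩ := exists_eigen g
  set R : ℝ := Quaternion.normSq (v 0) + Quaternion.normSq (v 1) with hRdef
  have hR : ip v v = (R : Quaternion ℝ) := ip_self v
  have hv01 : v 0 ≠ 0 ∨ v 1 ≠ 0 := by
    by_contra hcon
    push_neg at hcon
    exact hv0 (funext fun n => by fin_cases n <;> simp [hcon.1, hcon.2])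
  have hRpos : 0 < R := by
    rcases hv01 with h1 | h1
    · have := normSq_pos_q h1
      have h2 : (0:ℝ) ≤ Quaternion.normSq (v 1) := Quaternion.normSq_nonneg
      rw [hRdef]; linarith
    · have := normSq_pos_q h1
      have h2 : (0:ℝ) ≤ Quaternion.normSq (v 0) := Quaternion.normSq_nonneg
      rw [hRdef]; linarith
  -- the eigenvalue is a unit
  have hcμ : star (cq μ) * cq μ = 1 := by
    have h1 := ip_preserved hg v v
    rw [hev, ip_smul_left, ip_smul_right, hR] at h1
    rw [Quaternion.coe_commutes, ← mul_assoc] at h1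
    have h2 : (1 : Quaternion ℝ) * (R : Quaternion ℝ) = (R : Quaternion ℝ) := one_mul _
    exact mul_right_cancel₀ (coe_ne_zero_q hRpos.ne') (h1.trans h2.symm)
  have hμμs : cq μ * star (cq μ) = 1 := by
    have h1 := Quaternion.star_mul_self (cq μ)
    have h2 := Quaternion.self_mul_star (cq μ)
    rw [hcμ] at h1
    rw [h2, ← h1]
  -- normalize the eigenvector
  set c : ℝ := (Real.sqrt R)⁻¹ with hcdef
  have hcR : c * (R * c) = 1 := by
    rw [hcdef, mul_comm (Real.sqrt R)⁻¹, mul_assoc, ← mul_inv,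
      Real.mul_self_sqrt hRpos.le, mul_inv_cancel₀ hRpos.ne']
  set v' : Fin 2 → Quaternion ℝ := fun n => v n * (c : Quaternion ℝ) with hv'def
  have hv'1 : ip v' v' = 1 := by
    rw [hv'def, ip_smul_left, ip_smul_right, hR, Quaternion.star_coe, ← Quaternion.coe_mul,
      ← Quaternion.coe_mul, hcR, Quaternion.coe_one]
  have hev' : g.mulVec v' = fun n => v' n * cq μ := by
    rw [hv'def, mulVec_right_mul, hev]
    funext n
    rw [mul_assoc, ← Quaternion.coe_commutes, ← mul_assoc]
  -- an orthonormal completion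
  obtain ⟨w, hw1, hworth⟩ : ∃ w : Fin 2 → Quaternion ℝ, ip w w = 1 ∧ ip v' w = 0 := by
    by_cases ha : v' 0 = 0
    · refine ⟨![1, 0], ?_, ?_⟩ <;>
        simp [ip, dotProduct, Fin.sum_univ_two, ha]
    · set b : Quaternion ℝ := -((star (v' 0))⁻¹ * star (v' 1)) with hbdef
      have horth0 : ip v' ![b, 1] = 0 := by
        simp only [ip, dotProduct, Fin.sum_univ_two, Pi.star_apply,
          Matrix.cons_val_zero, Matrix.cons_val_one, Matrix.head_cons, mul_one, hbdef]
        rw [mul_neg, ← mul_assoc, mul_inv_cancel₀ (star_ne_zero.mpr ha), one_mul,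
          neg_add_cancel]
      set S : ℝ := Quaternion.normSq b + 1 with hSdef
      have hSpos : 0 < S := by
        have := Quaternion.normSq_nonneg (a := b)
        rw [hSdef]; linarith
      set cw : ℝ := (Real.sqrt S)⁻¹ with hcwdef
      have hcwS : cw * (S * cw) = 1 := by
        rw [hcwdef, mul_comm (Real.sqrt S)⁻¹, mul_assoc, ← mul_inv,
          Real.mul_self_sqrt hSpos.le, mul_inv_cancel₀ hSpos.ne']
      refine ⟨fun n => ![b, 1] n * (cw : Quaternion ℝ), ?_, ?_⟩
      · rw [ip_smul_left, ip_smul_right]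
        have hbb : ip ![b, 1] ![b, 1] = (S : Quaternion ℝ) := by
          simp [ip, dotProduct, Fin.sum_univ_two, Quaternion.star_mul_self, hSdef]
        rw [hbb, Quaternion.star_coe, ← Quaternion.coe_mul, ← Quaternion.coe_mul, hcwS,
          Quaternion.coe_one]
      · rw [ip_smul_right, horth0, zero_mul]
  set x : Fin 2 → Fin 2 → Quaternion ℝ := ![v', w] with hxdef
  have hx0 : x 0 = v' := rfl
  have hx1 : x 1 = w := rfl
  have hhhT : rowsM x * (rowsM x)ᴴ = 1 := by
    refine Matrix.ext fun i j => ?_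
    rw [mul_conjT_self]
    fin_cases i <;> fin_cases j
    · simpa [hx0] using hv'1
    · simpa [hx0, hx1] using hworth
    · simpa [hx0, hx1, ip_conj v' w] using congrArg star hworth
    · simpa [hx1] using hw1
  have hhTh : (rowsM x)ᴴ * rowsM x = 1 := left_inv_comm _ hhhT
  -- off-diagonal entries vanish
  have h01 : ip v' (g.mulVec w) = 0 := by
    have h1 := ip_preserved hg v' w
    rw [hev', ip_smul_left, hworth] at h1
    calc ip v' (g.mulVec w) = (cq μ * star (cq μ)) * ip v' (g.mulVec w) := by rw [hμμs, one_mul]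
      _ = cq μ * (star (cq μ) * ip v' (g.mulVec w)) := by rw [mul_assoc]
      _ = 0 := by rw [h1, mul_zero]
  have h10 : ip w (g.mulVec v') = 0 := by
    rw [hev', ip_smul_right, ip_conj v' w, hworth, star_zero, zero_mul]
  set ν : Quaternion ℝ := ip w (g.mulVec w) with hνdef
  have hD : rowsM x * g * (rowsM x)ᴴ = Matrix.diagonal ![cq μ, ν] := by
    refine Matrix.ext fun i j => ?_
    rw [mul_conjT_entry]
    fin_cases i <;> fin_cases j
    · have : ip v' (g.mulVec v') = cq μ := by
        rw [hev', ip_smul_right, hv'1, one_mul]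
      simpa [hx0, Matrix.diagonal] using this
    · simpa [hx0, hx1, Matrix.diagonal] using h01
    · simpa [hx0, hx1, Matrix.diagonal] using h10
    · simpa [hx1, Matrix.diagonal] using hνdef.symm
  -- ν is a unit
  have hc1 : ∀ X : Matrix (Fin 2) (Fin 2) (Quaternion ℝ), (rowsM x)ᴴ * (rowsM x * X) = X :=
    fun X => by rw [← Matrix.mul_assoc, hhTh, Matrix.one_mul]
  have hc2 : ∀ X : Matrix (Fin 2) (Fin 2) (Quaternion ℝ), gᴴ * (g * X) = X :=
    fun X => by rw [← Matrix.mul_assoc, hg, Matrix.one_mul]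
  have hDunit : (Matrix.diagonal ![cq μ, ν])ᴴ * Matrix.diagonal ![cq μ, ν] = 1 := by
    rw [← hD]
    simp only [Matrix.conjTranspose_mul, Matrix.conjTranspose_conjTranspose, Matrix.mul_assoc]
    rw [hc1, hc2]
    exact hhhT
  have hν : star ν * ν = 1 := by
    have h2 := congrFun (congrFun hDunit 1) 1
    simpa [Matrix.diagonal_conjTranspose, Matrix.diagonal_mul_diagonal,
      Matrix.diagonal_apply_eq, Matrix.one_apply] using h2
  -- conjugate the diagonal entries into the torus
  obtain ⟨u₁, hu₁, θ₁, hθ₁⟩ := conj_unit_to_E (cq μ) hcμ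
  obtain ⟨u₂, hu₂, θ₂, hθ₂⟩ := conj_unit_to_E ν hν
  set P : Matrix (Fin 2) (Fin 2) (Quaternion ℝ) := Matrix.diagonal ![u₁, u₂] with hPdef
  have hPP : Pᴴ * P = 1 := by
    rw [hPdef, Matrix.diagonal_conjTranspose, Matrix.diagonal_mul_diagonal]
    refine Matrix.ext fun i j => ?_
    fin_cases i <;> fin_cases j <;>
      simp [Matrix.diagonal_apply, Matrix.one_apply, hu₁, hu₂]
  refine ⟨P * rowsM x, ?_, θ₁, θ₂, ?_⟩
  · rw [Matrix.conjTranspose_mul, Matrix.mul_assoc, ← Matrix.mul_assoc Pᴴ, hPP,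
      Matrix.one_mul, hhTh]
  · have hPDP : P * Matrix.diagonal ![cq μ, ν] * Pᴴ = Matrix.diagonal ![E θ₁, E θ₂] := by
      rw [hPdef, Matrix.diagonal_conjTranspose, Matrix.diagonal_mul_diagonal,
        Matrix.diagonal_mul_diagonal]
      refine congrArg Matrix.diagonal ?_
      funext i
      fin_cases i <;> simp [hθ₁, hθ₂]
    calc P * rowsM x * g * (P * rowsM x)ᴴ
        = P * (rowsM x * g * (rowsM x)ᴴ) * Pᴴ := by
          rw [Matrix.conjTranspose_mul]
          simp only [Matrix.mul_assoc]
      _ = P * Matrix.diagonal ![cq μ, ν] * Pᴴ := by rw [hD]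
      _ = Matrix.diagonal ![E θ₁, E θ₂] := hPDP
end

section
/- Let t₀ ∈ (0, π), let a ≥ b ≥ 0 be real numbers with a² + b² = 2, and let g ∈ Sp(2) satisfy g·diag(E(a·t₀), E(b·t₀))·gᴴ = diag(E(t₀), E(t₀)). Then a = b = 1 and g commutes with v = diag(i, i). -/
open Matrix Real

/-- The quaternion imaginary unit `i`. -/
noncomputable def qi : Quaternion ℝ := ⟨0, 1, 0, 0⟩

/-- `v = diag(i, i) ∈ M₂(ℍ)`. -/
noncomputable def vmat : Matrix (Fin 2) (Fin 2) (Quaternion ℝ) :=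
  Matrix.diagonal (fun _ => qi)

lemma re_mul_comm (x y : Quaternion ℝ) : (x * y).re = (y * x).re := by
  simp [Quaternion.re_mul]; ring

lemma key_re (θ : ℝ) (x : Quaternion ℝ) :
    (star x * E θ * x).re = Real.cos θ * Quaternion.normSq x := by
  rw [re_mul_comm, ← mul_assoc, Quaternion.self_mul_star]
  rw [Quaternion.coe_mul_eq_smul, Quaternion.re_smul]
  simp [E, mul_comm]

lemma mul_conjTranspose_eq_one (g : Matrix (Fin 2) (Fin 2) (Quaternion ℝ))
    (hg : gᴴ * g = 1) : g * gᴴ = 1 := by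
  have h1 : LinearMap.mulLeft ℝ gᴴ * LinearMap.mulLeft ℝ g = 1 := by
    rw [Module.End.mul_eq_comp, ← LinearMap.mulLeft_mul, hg, LinearMap.mulLeft_one]; rfl
  rw [mul_eq_one_comm, Module.End.mul_eq_comp, ← LinearMap.mulLeft_mul] at h1
  have := congrArg (fun f => f (1 : Matrix (Fin 2) (Fin 2) (Quaternion ℝ))) h1
  simpa using this

/-- let `t₀ ∈ (0, π)`, `a ≥ b ≥ 0` with `a² + b² = 2`, and let `g ∈ Sp(2)`
satisfy `g·diag(E(a t₀), E(b t₀))·gᴴ = diag(E t₀, E t₀)`. Then `a = b = 1` and `g`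
commutes with `v = diag(i, i)`. -/
theorem uniqueness_of_minimizing_geodesic
    (t₀ : ℝ) (ht₀ : t₀ ∈ Set.Ioo 0 π) (a b : ℝ) (hab : a ≥ b) (hb : b ≥ 0)
    (habs : a ^ 2 + b ^ 2 = 2)
    (g : Matrix (Fin 2) (Fin 2) (Quaternion ℝ)) (hg : gᴴ * g = 1)
    (h : g * Matrix.diagonal ![E (a * t₀), E (b * t₀)] * gᴴ
        = Matrix.diagonal ![E t₀, E t₀]) :
    a = 1 ∧ b = 1 ∧ g * vmat = vmat * g := by
  obtain ⟨ht0, htpi⟩ := ht₀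
  have hgg : g * gᴴ = 1 := mul_conjTranspose_eq_one g hg
  -- D = gᴴ M g
  have hD : Matrix.diagonal ![E (a * t₀), E (b * t₀)]
      = gᴴ * Matrix.diagonal ![E t₀, E t₀] * g := by
    have key : gᴴ * (g * Matrix.diagonal ![E (a * t₀), E (b * t₀)] * gᴴ) * g
        = Matrix.diagonal ![E (a * t₀), E (b * t₀)] := by
      simp only [← Matrix.mul_assoc]
      rw [hg, Matrix.one_mul, Matrix.mul_assoc, hg, Matrix.mul_one]
    rw [← h]
    exact key.symm
  -- (1,1) entry of hD
  have hentry : E (b * t₀)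
      = star (g 0 1) * E t₀ * g 0 1 + star (g 1 1) * E t₀ * g 1 1 := by
    have := congrFun (congrFun hD 1) 1
    simpa [Matrix.mul_apply, Fin.sum_univ_two, Matrix.conjTranspose_apply,
      Matrix.diagonal, Matrix.of_apply] using this
  -- column norm
  have hnorm : Quaternion.normSq (g 0 1) + Quaternion.normSq (g 1 1) = 1 := by
    have := congrFun (congrFun hg 1) 1
    simp only [Matrix.mul_apply, Fin.sum_univ_two, Matrix.conjTranspose_apply,
      Matrix.one_apply_eq] at this
    rw [Quaternion.star_mul_self, Quaternion.star_mul_self] at this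
    exact_mod_cast congrArg QuaternionAlgebra.re this
  -- hence cos (b t₀) = cos t₀
  have hcos : Real.cos (b * t₀) = Real.cos t₀ := by
    have := congrArg QuaternionAlgebra.re hentry
    rw [Quaternion.re_add, key_re, key_re] at this
    rw [show (E (b * t₀)).re = Real.cos (b * t₀) from rfl] at this
    rw [this]; rw [← mul_add, hnorm, mul_one]
  have hb1 : b ≤ 1 := by nlinarith
  have hbt : b * t₀ = t₀ := by
    exact Real.injOn_cos ⟨by positivity, by nlinarith⟩
      ⟨le_of_lt ht0, le_of_lt htpi⟩ hcos
  have hbeq : b = 1 := by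
    have ht0' : t₀ ≠ 0 := ne_of_gt ht0
    exact mul_right_cancel₀ ht0' (by rw [hbt, one_mul])
  have haeq : a = 1 := by nlinarith
  refine ⟨haeq, hbeq, ?_⟩
  rw [haeq, hbeq, one_mul] at h
  set M := Matrix.diagonal ![E t₀, E t₀] with hMdef
  have hgM : g * M = M * g := by
    calc g * M = g * M * (gᴴ * g) := by rw [hg, mul_one]
      _ = (g * M * gᴴ) * g := by rw [← mul_assoc]
      _ = M * g := by rw [h]
  have hM : M = (Real.cos t₀) • (1 : Matrix (Fin 2) (Fin 2) (Quaternion ℝ))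
      + (Real.sin t₀) • vmat := by
    refine Matrix.ext fun i j => ?_
    fin_cases i <;> fin_cases j <;>
      simp [hMdef, vmat, Matrix.diagonal, Matrix.one_apply, Matrix.of_apply,
        Quaternion.ext_iff, Quaternion.re_smul, Quaternion.re_one, Quaternion.imI_one,
        Quaternion.imJ_one, Quaternion.imK_one] <;> simp [E, qi]
  rw [hM, mul_add, add_mul, Matrix.mul_smul, Matrix.smul_mul, Matrix.mul_smul,
    Matrix.smul_mul, mul_one, one_mul] at hgM
  have hcancel : Real.sin t₀ • (g * vmat) = Real.sin t₀ • (vmat * g) :=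
    add_left_cancel hgM
  have hs : Real.sin t₀ ≠ 0 := ne_of_gt (Real.sin_pos_of_pos_of_lt_pi ht0 htpi)
  have := congrArg (fun X => (Real.sin t₀)⁻¹ • X) hcancel
  simpa [inv_smul_smul₀ hs] using this
end
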